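/- Let A be a commutative algebra over a field k of characteristic p > 0, let D be a k-derivation of A and a ∈ A. Then the derivation aD satisfies Hochschild's formula: (aD)^p = a^p · D^p + ((aD)^{p-1}(a)) · D, as k-linear endomorphisms of A. -/

import Mathlib

open Finset MvPolynomial

section General
variable {k A : Type*} [CommRing k] [CommRing A] [Algebra k A]

theorem iterate_leibniz (D : Derivation k A A) (n : ℕ) (x y : A) :
    (⇑D)^[n] (x * y) =
      ∑ j ∈ range (n + 1), (n.choose j : A) * ((⇑D)^[j] x * (⇑D)^[n - j] y) := by
  induction n with
  | zero => simp
  | succ n ih =>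
    rw [Function.iterate_succ_apply', ih, map_sum]
    have hterm : ∀ j ∈ range (n + 1),
        D ((n.choose j : A) * ((⇑D)^[j] x * (⇑D)^[n - j] y)) =
          (n.choose j : A) * ((⇑D)^[j+1] x * (⇑D)^[n - j] y)
          + (n.choose j : A) * ((⇑D)^[j] x * (⇑D)^[(n - j) + 1] y) := by
      intro j hj
      rw [Derivation.leibniz, Derivation.leibniz]
      simp only [Function.iterate_succ_apply', smul_eq_mul]
      rw [Derivation.map_natCast]
      ring
    rw [Finset.sum_congr rfl hterm, Finset.sum_add_distrib]
    have e1 : ∑ j ∈ range (n + 1 + 1), ((n+1).choose j : A) * ((⇑D)^[j] x * (⇑D)^[n + 1 - j] y)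
        = (∑ j ∈ range (n + 1), (n.choose j : A) * ((⇑D)^[j+1] x * (⇑D)^[n - j] y))
          + ((∑ j ∈ range (n + 1), (n.choose (j+1) : A) * ((⇑D)^[j+1] x * (⇑D)^[n - j] y))
             + x * (⇑D)^[n+1] y) := by
      rw [Finset.sum_range_succ']
      simp only [Nat.succ_sub_succ, Nat.choose_succ_succ, Nat.cast_add, add_mul,
        Finset.sum_add_distrib, Nat.choose_zero_right, Nat.cast_one, one_mul,
        Function.iterate_zero_apply, Nat.sub_zero, Nat.succ_eq_add_one]
      ring
    have e2 : (∑ j ∈ range (n + 1), (n.choose (j+1) : A) * ((⇑D)^[j+1] x * (⇑D)^[n - j] y))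
          + x * (⇑D)^[n+1] y
        = ∑ j ∈ range (n + 1), (n.choose j : A) * ((⇑D)^[j] x * (⇑D)^[n - j + 1] y) := by
      rw [Finset.sum_range_succ (fun j => ((n.choose (j+1) : A)) * ((⇑D)^[j+1] x * (⇑D)^[n - j] y)),
        Finset.sum_range_succ' (fun j => ((n.choose j : A)) * ((⇑D)^[j] x * (⇑D)^[n - j + 1] y))]
      simp only [Nat.choose_succ_self, Nat.cast_zero, zero_mul, add_zero,
        Nat.choose_zero_right, Nat.cast_one, one_mul, Function.iterate_zero_apply, Nat.sub_zero]
      congr 1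
      apply Finset.sum_congr rfl
      intro j hj
      rw [Finset.mem_range] at hj
      have : n - (j + 1) + 1 = n - j := by omega
      rw [this]
    rw [e1, e2]

theorem pow_leibniz (p : ℕ) (hp : p.Prime) (hpA : (p : A) = 0)
    (D : Derivation k A A) (x y : A) :
    (⇑D)^[p] (x * y) = x * (⇑D)^[p] y + (⇑D)^[p] x * y := by
  rw [iterate_leibniz]
  rw [Finset.sum_range_succ]
  simp only [Nat.choose_self, Nat.cast_one, one_mul, Nat.sub_self,
    Function.iterate_zero_apply]
  congr 1
  rw [Finset.sum_eq_single_of_mem 0 (Finset.mem_range.2 hp.pos)]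
  · simp
  · intro j hj hj0
    rw [Finset.mem_range] at hj
    obtain ⟨c, hc⟩ := hp.dvd_choose_self hj0 hj
    rw [hc]
    push_cast
    rw [hpA]
    ring

variable (D : Derivation k A A) (a : A)

noncomputable def hcoef : ℕ → ℕ → A
  | 0, 0 => 1
  | 0, _ + 1 => 0
  | _ + 1, 0 => 0
  | n + 1, i + 1 => a * D (hcoef n (i + 1)) + a * hcoef n i

theorem hcoef_eq_zero_of_lt : ∀ n i, n < i → hcoef D a n i = 0 := by
  intro n
  induction n with
  | zero => intro i hi; match i, hi with | (j+1), _ => rfl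
  | succ n ih =>
    intro i hi
    match i, hi with
    | (j+1), hi =>
      show a * D (hcoef D a n (j + 1)) + a * hcoef D a n j = 0
      rw [ih (j+1) (by omega), ih j (by omega), map_zero]
      ring

theorem hcoef_diag (n : ℕ) : hcoef D a n n = a ^ n := by
  induction n with
  | zero => show (1:A) = a ^ 0; rw [pow_zero]
  | succ n ih =>
    show a * D (hcoef D a n (n + 1)) + a * hcoef D a n n = a ^ (n + 1)
    rw [hcoef_eq_zero_of_lt D a n (n+1) (by omega), map_zero, ih]
    ring

theorem hcoef_one : ∀ n : ℕ, hcoef D a (n + 1) 1 = (fun y => a * D y)^[n] a := by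
  intro n
  induction n with
  | zero => show a * D (hcoef D a 0 1) + a * hcoef D a 0 0 = a; show a * D 0 + a * 1 = a
            rw [map_zero]; ring
  | succ n ih =>
    show a * D (hcoef D a (n+1) 1) + a * hcoef D a (n+1) 0 = _
    rw [ih, Function.iterate_succ_apply']
    show a * D ((fun y => a * D y)^[n] a) + a * 0 = a * D ((fun y => a * D y)^[n] a)
    ring

theorem hcoef_expand (n : ℕ) (x : A) :
    (fun y => a * D y)^[n] x = ∑ i ∈ range (n + 1), hcoef D a n i * (⇑D)^[i] x := by
  induction n with
  | zero => simp [hcoef]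
  | succ n ih =>
    rw [Function.iterate_succ_apply', ih]
    show a * D (∑ i ∈ range (n + 1), hcoef D a n i * (⇑D)^[i] x) = _
    rw [map_sum, Finset.mul_sum]
    have hterm : ∀ i ∈ range (n + 1),
        a * D (hcoef D a n i * (⇑D)^[i] x)
          = a * D (hcoef D a n i) * (⇑D)^[i] x + a * hcoef D a n i * (⇑D)^[i+1] x := by
      intro i _
      rw [Derivation.leibniz]
      simp only [smul_eq_mul, Function.iterate_succ_apply']
      ring
    rw [Finset.sum_congr rfl hterm, Finset.sum_add_distrib]
    conv_rhs => rw [Finset.sum_range_succ']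
    have hz : hcoef D a (n+1) 0 * (⇑D)^[0] x = 0 := by
      show (0 : A) * _ = 0; ring
    rw [hz, add_zero]
    have : ∀ j ∈ range (n + 1),
        hcoef D a (n+1) (j+1) * (⇑D)^[j+1] x
          = a * D (hcoef D a n (j+1)) * (⇑D)^[j+1] x + a * hcoef D a n j * (⇑D)^[j+1] x := by
      intro j _
      show (a * D (hcoef D a n (j + 1)) + a * hcoef D a n j) * (⇑D)^[j+1] x = _
      ring
    rw [Finset.sum_congr rfl this, Finset.sum_add_distrib]
    congr 1
    -- Σ_{i∈range(n+1)} a * D(hcoef n i) * D^i x = Σ_{j∈range(n+1)} a * D(hcoef n (j+1)) * D^{j+1} x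
    rw [Finset.sum_range_succ', Finset.sum_range_succ
      (fun j => a * D (hcoef D a n (j+1)) * (⇑D)^[j+1] x)]
    have h0 : a * D (hcoef D a n 0) * (⇑D)^[0] x = 0 := by
      match n with
      | 0 => show a * D 1 * _ = 0; rw [Derivation.map_one_eq_zero]; ring
      | m + 1 => show a * D 0 * _ = 0; rw [map_zero]; ring
    have hn : a * D (hcoef D a n (n+1)) * (⇑D)^[n+1] x = 0 := by
      rw [hcoef_eq_zero_of_lt D a n (n+1) (by omega), map_zero]; ring
    rw [h0, hn]

theorem hcoef_map {A' : Type*} [CommRing A'] [Algebra k A'] (D' : Derivation k A' A')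
    (φ : A →ₐ[k] A') (hφ : ∀ z, φ (D z) = D' (φ z)) :
    ∀ n i, φ (hcoef D a n i) = hcoef D' (φ a) n i := by
  intro n
  induction n with
  | zero =>
    intro i
    match i with
    | 0 => show φ 1 = (1 : A'); exact map_one φ
    | j + 1 => show φ 0 = (0 : A'); exact map_zero φ
  | succ n ih =>
    intro i
    match i with
    | 0 => show φ 0 = (0 : A'); exact map_zero φ
    | j + 1 =>
      show φ (a * D (hcoef D a n (j + 1)) + a * hcoef D a n j) = _
      rw [map_add, map_mul, map_mul, hφ, ih, ih]
      rfl


end General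

section Universal

variable (k : Type*) [Field k]

/-- The universal derivation on `k[X_{s,j} : s ∈ Fin 3, j ∈ ℕ]` shifting every variable. -/
noncomputable def D0 : Derivation k (MvPolynomial (Fin 3 × ℕ) k) (MvPolynomial (Fin 3 × ℕ) k) :=
  MvPolynomial.mkDerivation k (fun s => X (s.1, s.2 + 1))

theorem D0_X (s : Fin 3) (j : ℕ) : D0 k (X (s, j)) = X (s, j + 1) :=
  MvPolynomial.mkDerivation_X _ _ _

theorem D0_iter_X (s : Fin 3) (i : ℕ) : ∀ j : ℕ, (⇑(D0 k))^[j] (X (s, i)) = X (s, i + j) := by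
  intro j
  induction j generalizing i with
  | zero => rfl
  | succ j ih =>
    rw [Function.iterate_succ_apply, D0_X, ih (i+1)]
    congr 2
    omega

/-- The subalgebra generated by the first family of variables. -/
noncomputable def S0 : Subalgebra k (MvPolynomial (Fin 3 × ℕ) k) :=
  Algebra.adjoin k (Set.range fun j : ℕ => X ((0 : Fin 3), j))

theorem D0_mem_S0 {q} (hq : q ∈ S0 k) : D0 k q ∈ S0 k := by
  induction hq using Algebra.adjoin_induction with
  | mem x hx =>
    obtain ⟨j, rfl⟩ := hx
    rw [D0_X]
    exact Algebra.subset_adjoin ⟨j + 1, rfl⟩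
  | algebraMap r => rw [Derivation.map_algebraMap]; exact Subalgebra.zero_mem _
  | add x y _ _ hx hy => rw [map_add]; exact Subalgebra.add_mem _ hx hy
  | mul x y _ _ hx hy =>
    rw [Derivation.leibniz, smul_eq_mul, smul_eq_mul]
    exact Subalgebra.add_mem _ (Subalgebra.mul_mem _ ‹_› hy) (Subalgebra.mul_mem _ ‹_› hx)

theorem hcoef_mem_S0 : ∀ n i, hcoef (D0 k) (X ((0:Fin 3), 0)) n i ∈ S0 k := by
  intro n
  induction n with
  | zero =>
    intro i
    match i with
    | 0 => exact Subalgebra.one_mem _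
    | j + 1 => exact Subalgebra.zero_mem _
  | succ n ih =>
    intro i
    match i with
    | 0 => exact Subalgebra.zero_mem _
    | j + 1 =>
      have ha : X ((0:Fin 3), 0) ∈ S0 k := Algebra.subset_adjoin ⟨0, rfl⟩
      exact Subalgebra.add_mem _
        (Subalgebra.mul_mem _ ha (D0_mem_S0 k (ih (j+1))))
        (Subalgebra.mul_mem _ ha (ih j))

end Universal

section Universal2
variable (k : Type*) [Field k]

/-- Evaluation map used to extract the `m`-th coefficient. -/
noncomputable def ev (m : ℕ) : MvPolynomial (Fin 3 × ℕ) k →ₐ[k] MvPolynomial (Fin 3 × ℕ) k :=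
  MvPolynomial.aeval (fun s : Fin 3 × ℕ =>
    if s.1 = 0 then X s else
    if s.1 = 1 then (if s.2 = 1 then 1 else 0) else
    (if s.2 = m - 1 then 1 else 0))

theorem ev_fix_S0 (m : ℕ) {q} (hq : q ∈ S0 k) : ev k m q = q := by
  induction hq using Algebra.adjoin_induction with
  | mem x hx =>
    obtain ⟨j, rfl⟩ := hx
    simp [ev]
  | algebraMap r => exact (ev k m).commutes r
  | add x y _ _ hx hy => rw [map_add, hx, hy]
  | mul x y _ _ hx hy => rw [map_mul, hx, hy]

theorem ev_X1 (m j : ℕ) : ev k m (X ((1:Fin 3), j)) = if j = 1 then 1 else 0 := by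
  simp [ev]

theorem ev_X2 (m j : ℕ) : ev k m (X ((2:Fin 3), j)) = if j = m - 1 then 1 else 0 := by
  simp [ev]

end Universal2

section Universal3
variable (k : Type*) [Field k]

theorem hcoef_vanish (p : ℕ) (hp : p.Prime) [CharP k p] (m : ℕ) (hm2 : 2 ≤ m) (hmp : m < p) :
    hcoef (D0 k) (X ((0:Fin 3), 0)) p m = 0 := by
  set B := MvPolynomial (Fin 3 × ℕ) k
  set a₀ : B := X ((0:Fin 3), 0) with ha₀
  set c : ℕ → B := fun i => hcoef (D0 k) a₀ p i with hc
  have hpB : (p : B) = 0 := by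
    rw [← map_natCast (algebraMap k B) p, CharP.cast_eq_zero k p, map_zero]
  have hE : ⇑(a₀ • D0 k) = fun y => a₀ * D0 k y := by
    funext y
    rw [Derivation.smul_apply, smul_eq_mul]
  have hΔ : ∀ q : B, ∑ i ∈ range p, c i * (⇑(D0 k))^[i] q
      = (fun y => a₀ * D0 k y)^[p] q - a₀ ^ p * (⇑(D0 k))^[p] q := by
    intro q
    rw [hcoef_expand, Finset.sum_range_succ, hcoef_diag]
    ring
  have hpow : ∀ x y : B, (fun y => a₀ * D0 k y)^[p] (x * y)
      = x * (fun y => a₀ * D0 k y)^[p] y + (fun y => a₀ * D0 k y)^[p] x * y := by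
    intro x y
    have := pow_leibniz p hp hpB (a₀ • D0 k) x y
    rwa [hE] at this
  have hleib : ∑ i ∈ range p, c i * (⇑(D0 k))^[i] (X ((1:Fin 3), 0) * X ((2:Fin 3), 0))
      = X ((1:Fin 3), 0) * ∑ i ∈ range p, c i * (⇑(D0 k))^[i] (X ((2:Fin 3), 0))
        + (∑ i ∈ range p, c i * (⇑(D0 k))^[i] (X ((1:Fin 3), 0))) * X ((2:Fin 3), 0) := by
    rw [hΔ, hΔ, hΔ, hpow, pow_leibniz p hp hpB (D0 k)]
    ring
  have hiter : ∀ (s : Fin 3) (i : ℕ), (⇑(D0 k))^[i] (X (s, 0)) = X (s, i) := by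
    intro s i
    rw [D0_iter_X]
    rw [zero_add]
  have hXmul : ∀ i : ℕ, (⇑(D0 k))^[i] (X ((1:Fin 3), 0) * X ((2:Fin 3), 0))
      = ∑ j ∈ range (i + 1), (i.choose j : B) * (X ((1:Fin 3), j) * X ((2:Fin 3), i - j)) := by
    intro i
    rw [iterate_leibniz]
    exact Finset.sum_congr rfl fun j _ => by rw [hiter, hiter]
  rw [Finset.sum_congr rfl fun i _ => by rw [hXmul]] at hleib
  simp only [hiter] at hleib
  -- apply the evaluation map
  have this := congrArg (ev k m) hleib
  have hfix : ∀ i, ev k m (c i) = c i := fun i => ev_fix_S0 k m (hcoef_mem_S0 k p i)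
  simp only [map_add, map_sum, map_mul, map_natCast, ev_X1, ev_X2, hfix,
    if_neg (show ¬(0 = 1) by omega), if_neg (show ¬((0:ℕ) = m - 1) by omega),
    zero_mul, mul_zero, add_zero, zero_add, Finset.sum_const_zero] at this
  have hmain : (fun i => c i * ∑ j ∈ range (i + 1), (i.choose j : B) *
      ((if j = 1 then (1:B) else 0) * if i - j = m - 1 then (1:B) else 0)) = fun i => c i *
      ∑ j ∈ range (i + 1), (i.choose j : B) *
      ((if j = 1 then (1:B) else 0) * if i - j = m - 1 then (1:B) else 0) := rfl
  -- extract the m-th term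
  have hext : ∑ i ∈ range p, c i * (∑ j ∈ range (i + 1), (i.choose j : B) *
      ((if j = 1 then (1:B) else 0) * if i - j = m - 1 then (1:B) else 0)) = (m : B) * c m := by
    rw [Finset.sum_eq_single_of_mem m (Finset.mem_range.2 hmp)]
    · rw [Finset.sum_eq_single_of_mem 1 (Finset.mem_range.2 (by omega))]
      · rw [if_pos rfl, if_pos (by omega), Nat.choose_one_right]
        ring
      · intro j hj hj1
        rw [if_neg hj1]
        ring
    · intro i hi him
      rw [Finset.mem_range] at hi
      have : ∀ j ∈ range (i + 1), (i.choose j : B) *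
          ((if j = 1 then (1:B) else 0) * if i - j = m - 1 then (1:B) else 0) = 0 := by
        intro j hj
        rw [Finset.mem_range] at hj
        rcases eq_or_ne j 1 with rfl | hj1
        · rw [if_neg (by omega : ¬(i - 1 = m - 1))]
          ring
        · rw [if_neg hj1]
          ring
      rw [Finset.sum_congr rfl this, Finset.sum_const_zero, mul_zero]
  rw [hext] at this
  -- conclude
  have hmk : ((m : k) : k) ≠ 0 := by
    intro h
    have hd := (CharP.cast_eq_zero_iff k p m).1 h
    have := Nat.le_of_dvd (by omega) hd
    omega
  have : c m = 0 := by
    calc c m = (algebraMap k B ((m : k)⁻¹) * algebraMap k B (m : k)) * c m := by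
          rw [← map_mul, inv_mul_cancel₀ hmk, map_one, one_mul]
      _ = algebraMap k B ((m : k)⁻¹) * ((m : B) * c m) := by
          rw [map_natCast]; ring
      _ = 0 := by rw [this, mul_zero]
  exact this

end Universal3


/-- Hochschild's formula: for a `k`-derivation `D` of a commutative `k`-algebra `A`
in characteristic `p > 0` and `a ∈ A`, `(aD)^p = a^p·D^p + ((aD)^{p-1}(a))·D`
as `k`-linear endomorphisms of `A`. -/
theorem stmt_3 (k A : Type*) [Field k] [CommRing A] [Algebra k A]
    (p : ℕ) [Fact p.Prime] [CharP k p] (D : Derivation k A A) (a : A) :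
    ∀ x : A, (fun y => a * D y)^[p] x =
      a ^ p * (⇑D)^[p] x + ((fun y => a * D y)^[p - 1] a) * D x := by
  intro x
  have hp : p.Prime := Fact.out
  set g : Fin 3 × ℕ → A := fun s => if s.1 = 0 then (⇑D)^[s.2] a else 0 with hg
  set φ : MvPolynomial (Fin 3 × ℕ) k →ₐ[k] A := MvPolynomial.aeval g with hφ
  have hgs : ∀ s : Fin 3 × ℕ, φ (X (s.1, s.2 + 1)) = D (φ (X s)) := by
    intro s
    obtain ⟨s1, s2⟩ := s
    rw [hφ]
    simp only [MvPolynomial.aeval_X, hg]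
    rcases eq_or_ne s1 0 with h0 | h0
    · rw [if_pos h0, if_pos h0, Function.iterate_succ_apply']
    · rw [if_neg h0, if_neg h0, map_zero]
  have hcomm : ∀ q : MvPolynomial (Fin 3 × ℕ) k, φ (D0 k q) = D (φ q) := by
    intro q
    induction q using MvPolynomial.induction_on with
    | C r =>
      rw [← MvPolynomial.algebraMap_eq, Derivation.map_algebraMap, map_zero,
        AlgHom.commutes, Derivation.map_algebraMap]
    | add q r hq hr => simp only [map_add, hq, hr]
    | mul_X q s hq =>
      rw [Derivation.leibniz, smul_eq_mul, smul_eq_mul, map_add, map_mul, map_mul,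
        map_mul, Derivation.leibniz, smul_eq_mul, smul_eq_mul, hq]
      have : D0 k (X s) = X (s.1, s.2 + 1) := by
        rw [show (X s : MvPolynomial (Fin 3 × ℕ) k) = X (s.1, s.2) from by rfl, D0_X]
      rw [this, hgs]
  have hφa : φ (X ((0:Fin 3), 0)) = a := by
    rw [hφ]
    simp [hg]
  have htrans : ∀ n i, φ (hcoef (D0 k) (X ((0:Fin 3), 0)) n i) = hcoef D a n i := by
    intro n i
    rw [hcoef_map (D0 k) (X ((0:Fin 3), 0)) D φ hcomm, hφa]
  have hvanish : ∀ m, 2 ≤ m → m < p → hcoef D a p m = 0 := by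
    intro m hm2 hmp
    rw [← htrans, hcoef_vanish k p hp m hm2 hmp, map_zero]
  -- assemble
  rw [hcoef_expand D a p x]
  have h2p : 2 ≤ p := hp.two_le
  have hsub : ({1, p} : Finset ℕ) ⊆ range (p + 1) := by
    intro i hi
    simp only [Finset.mem_insert, Finset.mem_singleton] at hi
    rcases hi with rfl | rfl <;> simp [Finset.mem_range] <;> omega
  rw [← Finset.sum_subset hsub]
  · rw [Finset.sum_pair (by omega : (1:ℕ) ≠ p)]
    have h1 : hcoef D a p 1 = (fun y => a * D y)^[p - 1] a := by
      have hthis : p = (p - 1) + 1 := by omega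
      conv_lhs => rw [hthis]
      rw [hcoef_one]
    rw [h1, hcoef_diag]
    simp only [Function.iterate_one]
    ring
  · intro i hi hins
    rw [Finset.mem_range] at hi
    simp only [Finset.mem_insert, Finset.mem_singleton] at hins
    push_neg at hins
    rcases Nat.eq_zero_or_pos i with rfl | hipos
    · obtain ⟨q, rfl⟩ : ∃ q, p = q + 1 := ⟨p - 1, by omega⟩
      show hcoef D a (q + 1) 0 * _ = 0
      show (0 : A) * _ = 0
      ring
    · rw [hvanish i (by omega) (by omega)]
      ring
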